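/- Let q ∈ 𝕋, δ ∈ (0,1), and let u, v be unitaries on H with ‖vu - q·uv‖ ≤ δ. Then there exist a Hilbert space K, an isometry ι : H → K, and unitaries ũ, ṽ ∈ B(K) with ṽũ = q·ũṽ such that ‖u - ι*ũι‖ < √δ and ‖v - ι*ṽι‖ < √δ. -/

import Mathlib

open scoped InnerProductSpace ComplexConjugate ENNReal
open ContinuousLinearMap

noncomputable section

namespace Stmt5Aux

variable {H : Type u} [NormedAddCommGroup H] [InnerProductSpace ℂ H] [CompleteSpace H]

abbrev KK (H : Type u) [NormedAddCommGroup H] [InnerProductSpace ℂ H] : Type u :=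
  lp (fun _ : ℤ => H) 2

lemma two_toReal_pos : 0 < (2 : ℝ≥0∞).toReal := by norm_num

lemma twist_mem (σ : ℤ ≃ ℤ) (T : ℤ → (H ≃ₗᵢ[ℂ] H)) (ξ : KK H) :
    Memℓp (fun n => T n (ξ (σ n))) 2 := by
  apply memℓp_gen
  have hs : Summable (fun n : ℤ => ‖ξ n‖ ^ (2 : ℝ≥0∞).toReal) :=
    (lp.memℓp ξ).summable two_toReal_pos
  have := (σ.summable_iff (f := fun n : ℤ => ‖ξ n‖ ^ (2 : ℝ≥0∞).toReal)).2 hs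
  simpa [Function.comp_def, LinearIsometryEquiv.norm_map] using this

/-- Twisted shift operator on `ℓ²(ℤ, H)`. -/
def twist (σ : ℤ ≃ ℤ) (T : ℤ → (H ≃ₗᵢ[ℂ] H)) : KK H ≃ₗᵢ[ℂ] KK H where
  toFun ξ := ⟨fun n => T n (ξ (σ n)), twist_mem σ T ξ⟩
  invFun ξ := ⟨fun n => (T (σ.symm n)).symm (ξ (σ.symm n)),
    twist_mem σ.symm (fun n => (T (σ.symm n)).symm) ξ⟩
  map_add' ξ η := by
    apply lp.ext; funext n
    show T n ((ξ + η) (σ n)) = _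
    rw [lp.coeFn_add]
    simp only [Pi.add_apply, map_add]
    rfl
  map_smul' c ξ := by
    apply lp.ext; funext n
    show T n ((c • ξ) (σ n)) = _
    rw [lp.coeFn_smul]
    simp only [Pi.smul_apply, map_smul]
    rfl
  left_inv ξ := by
    apply lp.ext; funext n
    show (T (σ.symm n)).symm (T (σ.symm n) (ξ (σ (σ.symm n)))) = ξ n
    simp
  right_inv ξ := by
    apply lp.ext; funext n
    show T n ((T (σ.symm (σ n))).symm (ξ (σ.symm (σ n)))) = ξ n
    simp
  norm_map' ξ := by
    rw [lp.norm_eq_tsum_rpow two_toReal_pos, lp.norm_eq_tsum_rpow two_toReal_pos]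
    congr 1
    have h1 : ∑' n : ℤ, ‖(⟨fun n => T n (ξ (σ n)), twist_mem σ T ξ⟩ : KK H) n‖ ^ (2 : ℝ≥0∞).toReal
        = ∑' n : ℤ, ‖ξ (σ n)‖ ^ (2 : ℝ≥0∞).toReal := by
      apply tsum_congr; intro n
      congr 1
      exact (T n).norm_map (ξ (σ n))
    exact h1.trans (σ.tsum_eq (fun n => ‖ξ n‖ ^ (2 : ℝ≥0∞).toReal))

lemma twist_apply (σ : ℤ ≃ ℤ) (T : ℤ → (H ≃ₗᵢ[ℂ] H)) (ξ : KK H) (n : ℤ) :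
    (twist σ T ξ : ∀ _ : ℤ, H) n = T n (ξ (σ n)) := rfl

lemma twist_single (σ : ℤ ≃ ℤ) (T : ℤ → (H ≃ₗᵢ[ℂ] H)) (i : ℤ) (x : H) :
    twist σ T (lp.single 2 i x) = lp.single 2 (σ.symm i) (T (σ.symm i) x) := by
  apply lp.ext; funext n
  by_cases hn : n = σ.symm i
  · subst hn
    rw [twist_apply, lp.single_apply_self]
    simp [lp.single_apply_self]
  · rw [twist_apply, lp.single_apply_ne _ _ _ hn, lp.single_apply_ne, map_zero]
    intro hc
    exact hn (by rw [← hc]; simp)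


lemma single_add (i : ℤ) (x y : H) :
    (lp.single 2 i (x + y) : KK H) = lp.single 2 i x + lp.single 2 i y := by
  apply lp.ext; funext n
  rw [lp.coeFn_add]
  by_cases hn : n = i
  · subst hn; simp [lp.single_apply_self]
  · simp [lp.single_apply_ne _ _ _ hn]

/-- `lp.single` as a continuous linear map. -/
def singleCLM (i : ℤ) : H →L[ℂ] KK H :=
  LinearMap.mkContinuous
    { toFun := fun x => lp.single 2 i x
      map_add' := single_add i
      map_smul' := fun c x => by simpa using lp.single_smul 2 i x c }
    1 (fun x => by
      rw [one_mul]
      exact le_of_eq (lp.norm_single (E := fun _ : ℤ => H) (by norm_num) i x))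

lemma singleCLM_apply (i : ℤ) (x : H) : singleCLM i x = (lp.single 2 i x : KK H) := by
  simp [singleCLM]

lemma inner_single_single (i j : ℤ) (x y : H) :
    ⟪(lp.single 2 i x : KK H), (lp.single 2 j y : KK H)⟫_ℂ
      = if i = j then ⟪x, y⟫_ℂ else 0 := by
  rw [lp.inner_single_left]
  by_cases hij : i = j
  · subst hij; simp [lp.single_apply_self]
  · rw [lp.single_apply_ne (E := fun _ : ℤ => H) 2 j y hij, if_neg hij, inner_zero_right]


lemma norm_unitary_mul (w : unitary (H →L[ℂ] H)) (x : H →L[ℂ] H) :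
    ‖(w : H →L[ℂ] H) * x‖ = ‖x‖ := by
  have h : (w : H →L[ℂ] H) * x
      = (Unitary.linearIsometryEquiv w).toLinearIsometry.toContinuousLinearMap.comp x := by
    ext h; rfl
  rw [h, LinearIsometry.norm_toContinuousLinearMap_comp]

lemma norm_mul_unitary (x : H →L[ℂ] H) (w : unitary (H →L[ℂ] H)) :
    ‖x * (w : H →L[ℂ] H)‖ = ‖x‖ := by
  have h : x * (w : H →L[ℂ] H)
      = x.comp (Unitary.linearIsometryEquiv w).toLinearIsometry.toContinuousLinearMap := by
    ext h; rfl
  rw [h]; exact opNorm_comp_linearIsometryEquiv x (Unitary.linearIsometryEquiv w)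

section main

variable {q : ℂ} {u v : H →L[ℂ] H}
  (hu : u ∈ unitary (H →L[ℂ] H)) (hv : v ∈ unitary (H →L[ℂ] H))

/-- The conjugated family `v^m u v^{-m}` inside the unitary group. -/
def Ag (m : ℤ) : unitary (H →L[ℂ] H) :=
  (⟨v, hv⟩ : unitary _) ^ m * (⟨u, hu⟩ : unitary _) * (⟨v, hv⟩ : unitary _) ^ (-m)

/-- The twisted family `q^{-m} v^m u v^{-m}`. -/
def Aop (q : ℂ) (m : ℤ) : H →L[ℂ] H := q ^ (-m) • (Ag hu hv m : H →L[ℂ] H)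

lemma Aop_zero : Aop hu hv q 0 = u := by
  simp [Aop, Ag]

lemma norm_q_zpow (hq : ‖q‖ = 1) (m : ℤ) : ‖q ^ m‖ = 1 := by
  rw [norm_zpow, hq, one_zpow]

lemma Aop_mem (hq : ‖q‖ = 1) (m : ℤ) : Aop hu hv q m ∈ unitary (H →L[ℂ] H) := by
  have hz : star (q ^ (-m)) * q ^ (-m) = 1 := by
    rw [RCLike.star_def, RCLike.conj_mul, norm_q_zpow hq]
    norm_num
  constructor
  · rw [Aop, star_smul, smul_mul_assoc, mul_smul_comm, smul_smul, hz, one_smul]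
    exact Unitary.star_mul_self_of_mem (Ag hu hv m).property
  · rw [Aop, star_smul, smul_mul_assoc, mul_smul_comm, smul_smul, mul_comm (q ^ (-m)), hz, one_smul]
    exact Unitary.mul_star_self_of_mem (Ag hu hv m).property


lemma Ag_rel (m : ℤ) :
    (⟨v, hv⟩ : unitary (H →L[ℂ] H)) * Ag hu hv m = Ag hu hv (m + 1) * ⟨v, hv⟩ := by
  show _ * ((_ * _) * _) = ((_ * _) * _) * _
  have h1 : (⟨v, hv⟩ : unitary (H →L[ℂ] H)) * (⟨v, hv⟩ : unitary (H →L[ℂ] H)) ^ m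
      = (⟨v, hv⟩ : unitary (H →L[ℂ] H)) ^ (m + 1) := by
    rw [← zpow_one_add]; congr 1; ring
  have h2 : (⟨v, hv⟩ : unitary (H →L[ℂ] H)) ^ (-(m + 1)) * (⟨v, hv⟩ : unitary (H →L[ℂ] H))
      = (⟨v, hv⟩ : unitary (H →L[ℂ] H)) ^ (-m) := by
    nth_rewrite 2 [← zpow_one (⟨v, hv⟩ : unitary (H →L[ℂ] H))]
    rw [← zpow_add]; congr 1; ring
  rw [← mul_assoc, ← mul_assoc, h1, mul_assoc _ _ (⟨v, hv⟩ : unitary (H →L[ℂ] H)), h2]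

lemma Aop_rel (hq : ‖q‖ = 1) (m : ℤ) :
    v * Aop hu hv q m = q • (Aop hu hv q (m + 1) * v) := by
  have hq0 : q ≠ 0 := by intro h; rw [h] at hq; simp at hq
  have h1 : v * Aop hu hv q m = q ^ (-m) • ((Ag hu hv (m+1) : H →L[ℂ] H) * v) := by
    rw [Aop, mul_smul_comm]
    congr 1
    have h2 := congrArg (Subtype.val) (Ag_rel hu hv m)
    simp only [MulMemClass.coe_mul] at h2
    exact h2
  rw [h1, Aop, smul_mul_assoc, smul_smul]
  congr 1
  rw [← zpow_one_add₀ hq0]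
  congr 1
  ring

lemma coe_zpow_comm (m : ℤ) :
    (((⟨v, hv⟩ : unitary (H →L[ℂ] H)) ^ m : unitary _) : H →L[ℂ] H) * v
      = v * (((⟨v, hv⟩ : unitary (H →L[ℂ] H)) ^ m : unitary _) : H →L[ℂ] H) := by
  have h := congrArg (Subtype.val)
    ((Commute.refl (⟨v, hv⟩ : unitary (H →L[ℂ] H))).zpow_left m).eq
  simp only [MulMemClass.coe_mul] at h
  exact h

set_option maxHeartbeats 1000000 in
lemma Aop_step (hq : ‖q‖ = 1) {δ : ℝ} (hδ : ‖v * u - q • (u * v)‖ ≤ δ) (m : ℤ) :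
    ‖Aop hu hv q (m + 1) - Aop hu hv q m‖ ≤ δ := by
  have hq0 : q ≠ 0 := by intro h; rw [h] at hq; simp at hq
  have e1 : ‖Aop hu hv q (m + 1) - Aop hu hv q m‖
      = ‖Aop hu hv q (m + 1) * v - Aop hu hv q m * v‖ := by
    rw [← sub_mul, norm_mul_unitary _ ⟨v, hv⟩]
  have e2 : Aop hu hv q (m + 1) * v = q⁻¹ • (v * Aop hu hv q m) := by
    rw [Aop_rel hu hv hq m, smul_smul, inv_mul_cancel₀ hq0, one_smul]
  have e3 : Aop hu hv q (m + 1) * v - Aop hu hv q m * v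
      = q⁻¹ • (v * Aop hu hv q m - q • (Aop hu hv q m * v)) := by
    rw [smul_sub, e2, smul_smul, inv_mul_cancel₀ hq0, one_smul]
  have hBg : (Ag hu hv m : H →L[ℂ] H)
      = ((⟨v, hv⟩ ^ m : unitary (H →L[ℂ] H)) : H →L[ℂ] H) * u *
        ((⟨v, hv⟩ ^ (-m) : unitary (H →L[ℂ] H)) : H →L[ℂ] H) := by
    simp only [Ag, MulMemClass.coe_mul]
  have e4 : v * Aop hu hv q m - q • (Aop hu hv q m * v)
      = q ^ (-m) • (((⟨v, hv⟩ ^ m : unitary (H →L[ℂ] H)) : H →L[ℂ] H) * (v * u - q • (u * v)) *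
          ((⟨v, hv⟩ ^ (-m) : unitary (H →L[ℂ] H)) : H →L[ℂ] H)) := by
    rw [Aop, hBg, mul_smul_comm, smul_mul_assoc, smul_smul, mul_comm q, ← smul_smul, ← smul_sub]
    congr 1
    rw [mul_sub, sub_mul, mul_smul_comm, smul_mul_assoc]
    congr 1
    · rw [← mul_assoc, ← mul_assoc, ← coe_zpow_comm hv m,
        mul_assoc ((((⟨v, hv⟩ : unitary (H →L[ℂ] H)) ^ m : unitary _) : H →L[ℂ] H)) v u]
    · congr 1
      rw [mul_assoc, coe_zpow_comm hv (-m), ← mul_assoc,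
        mul_assoc ((((⟨v, hv⟩ : unitary (H →L[ℂ] H)) ^ m : unitary _) : H →L[ℂ] H)) u v]
  rw [e1, e3, e4, norm_smul, norm_smul, norm_inv, hq, inv_one, one_mul,
    norm_q_zpow hq, one_mul, norm_mul_unitary _ (⟨v, hv⟩ ^ (-m)), norm_unitary_mul (⟨v, hv⟩ ^ m) _]
  exact hδ

lemma Aop_dist (hq : ‖q‖ = 1) {δ : ℝ} (hδ0 : 0 ≤ δ) (hδ : ‖v * u - q • (u * v)‖ ≤ δ)
    (n : ℕ) : ‖Aop hu hv q n - u‖ ≤ n * δ := by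
  induction n with
  | zero => simp [Aop_zero]
  | succ n ih =>
    have h1 : (((n + 1 : ℕ) : ℤ)) = (n : ℤ) + 1 := by push_cast; ring
    rw [h1]
    calc ‖Aop hu hv q ((n : ℤ) + 1) - u‖
        ≤ ‖Aop hu hv q ((n : ℤ) + 1) - Aop hu hv q (n : ℤ)‖ + ‖Aop hu hv q (n : ℤ) - u‖ := by
          simpa using norm_sub_le_norm_sub_add_norm_sub
            (Aop hu hv q ((n : ℤ) + 1)) (Aop hu hv q (n : ℤ)) u
      _ ≤ δ + n * δ := add_le_add (Aop_step hu hv hq hδ (n : ℤ)) ih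
      _ = ((n : ℕ) + 1 : ℕ) * δ := by push_cast; ring

/-- Compression is determined by inner products. -/
lemma compress_eq (ι' : H →L[ℂ] KK H) (Aop' : KK H →L[ℂ] KK H) (B : H →L[ℂ] H)
    (hAB : ∀ x y : H, ⟪Aop' (ι' x), ι' y⟫_ℂ = ⟪B x, y⟫_ℂ) :
    ContinuousLinearMap.adjoint ι' ∘L Aop' ∘L ι' = B := by
  ext x
  apply ext_inner_right ℂ
  intro y
  rw [ContinuousLinearMap.comp_apply, ContinuousLinearMap.comp_apply,
    ContinuousLinearMap.adjoint_inner_left]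
  exact hAB x y

lemma LIE_mem_unitary (e : KK H ≃ₗᵢ[ℂ] KK H) :
    (e : KK H →L[ℂ] KK H) ∈ unitary (KK H →L[ℂ] KK H) :=
  (Unitary.linearIsometryEquiv.symm e).property

end main
end Stmt5Aux

open Stmt5Aux
set_option maxHeartbeats 1000000

/-- Let `q ∈ 𝕋`, `δ ∈ (0,1)`, and `u, v` unitaries on `H` with `‖vu - q·uv‖ ≤ δ`.
Then there exist a Hilbert space `K`, an isometry `ι : H → K` and unitaries `ũ, ṽ ∈ B(K)` with
`ṽũ = q·ũṽ`, `‖u - ι*ũι‖ < √δ` and `‖v - ι*ṽι‖ < √δ`. -/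
theorem stmt_5 {H : Type u} [NormedAddCommGroup H] [InnerProductSpace ℂ H] [CompleteSpace H]
    (q : ℂ) (hq : ‖q‖ = 1) (δ : ℝ) (hδ0 : 0 < δ) (hδ1 : δ < 1) (u v : H →L[ℂ] H)
    (hu : u ∈ unitary (H →L[ℂ] H)) (hv : v ∈ unitary (H →L[ℂ] H))
    (h : ‖v * u - q • (u * v)‖ ≤ δ) :
    ∃ (K : Type u) (_ : NormedAddCommGroup K) (_ : InnerProductSpace ℂ K) (_ : CompleteSpace K)
      (ι : H →L[ℂ] K) (ut vt : K →L[ℂ] K),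
      Isometry ι ∧ ut ∈ unitary (K →L[ℂ] K) ∧ vt ∈ unitary (K →L[ℂ] K) ∧
      vt * ut = q • (ut * vt) ∧
      ‖u - ContinuousLinearMap.adjoint ι ∘L ut ∘L ι‖ < Real.sqrt δ ∧
      ‖v - ContinuousLinearMap.adjoint ι ∘L vt ∘L ι‖ < Real.sqrt δ := by
  classical
  -- numerics
  set r : ℝ := Real.sqrt δ with hr
  have hr0 : 0 < r := Real.sqrt_pos.2 hδ0
  have hrr : r * r = δ := Real.mul_self_sqrt hδ0.le
  set N : ℕ := ⌊r⁻¹⌋₊ + 1 with hN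
  have hN0 : 0 < N := Nat.succ_pos _
  have hN0R : (0:ℝ) < N := by exact_mod_cast hN0
  have hNgt : r⁻¹ < (N : ℝ) := by
    simpa [hN] using Nat.lt_floor_add_one r⁻¹
  have hNle : (N : ℝ) - 1 ≤ r⁻¹ := by
    have := Nat.floor_le (a := r⁻¹) (by positivity)
    simp only [hN]
    push_cast
    linarith
  have hNinv : (N : ℝ)⁻¹ < r := by
    rw [inv_lt_comm₀ hN0R hr0]
    exact hNgt
  have hNC : ((N : ℕ) : ℂ) ≠ 0 := by exact_mod_cast hN0.ne'
  -- operators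
  set aLIE : ℤ → (H ≃ₗᵢ[ℂ] H) :=
    fun m => Unitary.linearIsometryEquiv ⟨Aop hu hv q m, Aop_mem hu hv hq m⟩ with haLIE
  set vLIE : H ≃ₗᵢ[ℂ] H := Unitary.linearIsometryEquiv ⟨v, hv⟩ with hvLIE
  set Ut : KK H ≃ₗᵢ[ℂ] KK H := twist (Equiv.refl ℤ) aLIE with hUt
  set Vt : KK H ≃ₗᵢ[ℂ] KK H := twist (Equiv.subRight (1:ℤ)) (fun _ => vLIE) with hVt
  have haLIE_apply : ∀ (m : ℤ) (x : H), aLIE m x = Aop hu hv q m x := fun m x => rfl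
  have hvLIE_apply : ∀ x : H, vLIE x = v x := fun x => rfl
  -- the isometric embedding
  set c : ℝ := (Real.sqrt N)⁻¹ with hc
  have hc2 : c * c = (N : ℝ)⁻¹ := by
    rw [hc, ← mul_inv, Real.mul_self_sqrt hN0R.le]
  set ι : H →L[ℂ] KK H := (c : ℂ) • ∑ k ∈ Finset.range N, singleCLM (k : ℤ) with hι
  have hι_apply : ∀ x : H, ι x = (c : ℂ) • ∑ k ∈ Finset.range N, (lp.single 2 (k : ℤ) x : KK H) := by
    intro x
    rw [hι]
    simp only [ContinuousLinearMap.smul_apply, ContinuousLinearMap.sum_apply, singleCLM_apply]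
  -- inner products of window sums
  have hdouble : ∀ (w : ℕ → H) (y : H),
      ⟪∑ k ∈ Finset.range N, (lp.single 2 (k : ℤ) (w k) : KK H),
        ∑ j ∈ Finset.range N, (lp.single 2 (j : ℤ) y : KK H)⟫_ℂ
      = ∑ k ∈ Finset.range N, ⟪w k, y⟫_ℂ := by
    intro w y
    rw [sum_inner]
    apply Finset.sum_congr rfl
    intro k hk
    rw [inner_sum]
    have hterm : ∀ j ∈ Finset.range N,
        ⟪(lp.single 2 (k : ℤ) (w k) : KK H), (lp.single 2 (j : ℤ) y : KK H)⟫_ℂ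
          = if k = j then ⟪w k, y⟫_ℂ else 0 := by
      intro j hj
      rw [inner_single_single]
      simp only [Nat.cast_inj]
    rw [Finset.sum_congr rfl hterm,
      Finset.sum_ite_eq (Finset.range N) k (fun _ => ⟪w k, y⟫_ℂ), if_pos hk]
  have hdouble' : ∀ (x y : H),
      ⟪∑ k ∈ Finset.range N, (lp.single 2 ((k : ℤ) + 1) x : KK H),
        ∑ j ∈ Finset.range N, (lp.single 2 (j : ℤ) y : KK H)⟫_ℂ
      = ((N - 1 : ℕ) : ℂ) * ⟪x, y⟫_ℂ := by
    intro x y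
    rw [sum_inner]
    have hrow : ∀ k ∈ Finset.range N,
        ⟪(lp.single 2 ((k : ℤ) + 1) x : KK H),
          ∑ j ∈ Finset.range N, (lp.single 2 (j : ℤ) y : KK H)⟫_ℂ
        = if k + 1 ∈ Finset.range N then ⟪x, y⟫_ℂ else 0 := by
      intro k hk
      rw [inner_sum]
      have hterm : ∀ j ∈ Finset.range N,
          ⟪(lp.single 2 ((k : ℤ) + 1) x : KK H), (lp.single 2 (j : ℤ) y : KK H)⟫_ℂ
            = if k + 1 = j then ⟪x, y⟫_ℂ else 0 := by
        intro j hj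
        rw [inner_single_single]
        have : ((k : ℤ) + 1 = (j : ℤ)) = (k + 1 = j) := by
          rw [eq_iff_iff]
          constructor
          · intro hh; omega
          · intro hh; omega
        simp only [this]
      rw [Finset.sum_congr rfl hterm,
        Finset.sum_ite_eq (Finset.range N) (k + 1) (fun _ => ⟪x, y⟫_ℂ)]
    rw [Finset.sum_congr rfl hrow]
    have hmem : ∀ k, (if k + 1 ∈ Finset.range N then ⟪x, y⟫_ℂ else 0)
        = (if k ∈ Finset.range (N - 1) then ⟪x, y⟫_ℂ else 0) := by
      intro k
      congr 1
      rw [eq_iff_iff, Finset.mem_range, Finset.mem_range]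
      omega
    rw [Finset.sum_congr rfl (fun k _ => hmem k), Finset.sum_ite_mem,
      Finset.inter_eq_right.mpr (Finset.range_mono (by omega)),
      Finset.sum_const, Finset.card_range, nsmul_eq_mul]
  have hcC : (c : ℂ) * (c : ℂ) = ((N : ℕ) : ℂ)⁻¹ := by
    rw [← Complex.ofReal_mul, hc2]
    push_cast
    ring
  have hιinner : ∀ x y : H, ⟪ι x, ι y⟫_ℂ = ⟪x, y⟫_ℂ := by
    intro x y
    rw [hι_apply, hι_apply, inner_smul_left, inner_smul_right,
      hdouble (fun _ => x) y, Finset.sum_const, Finset.card_range,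
      Complex.conj_ofReal, nsmul_eq_mul, ← mul_assoc, ← mul_assoc, hcC,
      inv_mul_cancel₀ hNC, one_mul]
  have hIso : Isometry ι := by
    refine AddMonoidHomClass.isometry_of_norm ι (fun x => ?_)
    rw [norm_eq_sqrt_re_inner (𝕜 := ℂ), hιinner x x, ← norm_eq_sqrt_re_inner (𝕜 := ℂ)]
  -- action on singles
  have hUt_single : ∀ (k : ℤ) (x : H),
      Ut (lp.single 2 k x) = lp.single 2 k (Aop hu hv q k x) := by
    intro k x
    rw [hUt, twist_single]
    rfl
  have hVt_single : ∀ (k : ℤ) (x : H),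
      Vt (lp.single 2 k x) = lp.single 2 (k + 1) (v x) := by
    intro k x
    rw [hVt, twist_single]
    have h1 : (Equiv.subRight (1:ℤ)).symm k = k + 1 := rfl
    rw [h1]
    rfl
  -- compression of Ut
  have hUcomp : ContinuousLinearMap.adjoint ι ∘L ((Ut : KK H →L[ℂ] KK H)) ∘L ι
      = ((N : ℕ) : ℂ)⁻¹ • ∑ k ∈ Finset.range N, Aop hu hv q (k : ℤ) := by
    apply compress_eq
    intro x y
    have h1 : (Ut : KK H →L[ℂ] KK H) (ι x)
        = (c : ℂ) • ∑ k ∈ Finset.range N, (lp.single 2 (k : ℤ) (Aop hu hv q (k : ℤ) x) : KK H) := by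
      show Ut (ι x) = _
      rw [hι_apply, map_smul, map_sum]
      congr 1
      exact Finset.sum_congr rfl (fun k _ => hUt_single (k : ℤ) x)
    rw [h1, hι_apply, inner_smul_left, inner_smul_right,
      hdouble (fun k => Aop hu hv q (k : ℤ) x) y, Complex.conj_ofReal,
      ContinuousLinearMap.smul_apply, ContinuousLinearMap.sum_apply, inner_smul_left, sum_inner,
      ← mul_assoc, hcC]
    congr 1
    rw [map_inv₀, Complex.conj_natCast]
  -- compression of Vt
  have hVcomp : ContinuousLinearMap.adjoint ι ∘L ((Vt : KK H →L[ℂ] KK H)) ∘L ι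
      = (((N : ℕ) : ℂ)⁻¹ * ((N - 1 : ℕ) : ℂ)) • v := by
    apply compress_eq
    intro x y
    have h1 : (Vt : KK H →L[ℂ] KK H) (ι x)
        = (c : ℂ) • ∑ k ∈ Finset.range N, (lp.single 2 ((k : ℤ) + 1) (v x) : KK H) := by
      show Vt (ι x) = _
      rw [hι_apply, map_smul, map_sum]
      congr 1
      exact Finset.sum_congr rfl (fun k _ => hVt_single (k : ℤ) x)
    rw [h1, hι_apply, inner_smul_left, inner_smul_right, hdouble' (v x) y,
      Complex.conj_ofReal, ContinuousLinearMap.smul_apply, inner_smul_left,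
      ← mul_assoc, ← mul_assoc, hcC]
    congr 1
    rw [map_mul, map_inv₀, Complex.conj_natCast, Complex.conj_natCast]
  -- commutation relation
  have hcommut : ((Vt : KK H →L[ℂ] KK H)) * ((Ut : KK H →L[ℂ] KK H))
      = q • (((Ut : KK H →L[ℂ] KK H)) * ((Vt : KK H →L[ℂ] KK H))) := by
    refine ContinuousLinearMap.ext fun ξ => ?_
    apply lp.ext
    funext n
    have hL : (((Vt : KK H →L[ℂ] KK H)) * ((Ut : KK H →L[ℂ] KK H))) ξ = Vt (Ut ξ) := rfl
    have hR : (q • (((Ut : KK H →L[ℂ] KK H)) * ((Vt : KK H →L[ℂ] KK H)))) ξ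
        = q • (Ut (Vt ξ)) := rfl
    rw [hL, hR, lp.coeFn_smul]
    have hLn : (Vt (Ut ξ) : ∀ _ : ℤ, H) n = v (Aop hu hv q (n - 1) (ξ (n - 1))) := by
      rw [hVt, twist_apply]
      have h1 : (Equiv.subRight (1:ℤ)) n = n - 1 := rfl
      rw [h1, hUt, twist_apply]
      rfl
    have hRn : (Ut (Vt ξ) : ∀ _ : ℤ, H) n = Aop hu hv q n (v (ξ (n - 1))) := by
      rw [hUt, twist_apply]
      have h1 : (Equiv.refl ℤ) n = n := rfl
      rw [h1, hVt, twist_apply]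
      rfl
    rw [hLn, Pi.smul_apply, hRn]
    have hkey := congrArg (fun T : H →L[ℂ] H => T (ξ (n - 1))) (Aop_rel hu hv hq (n - 1))
    simp only [ContinuousLinearMap.mul_apply, ContinuousLinearMap.smul_apply] at hkey
    rw [sub_add_cancel] at hkey
    exact hkey
  -- error bound for u
  have hN1 : 1 ≤ N := hN0
  have hsubU : u - ((N : ℕ) : ℂ)⁻¹ • ∑ k ∈ Finset.range N, Aop hu hv q (k : ℤ)
      = ((N : ℕ) : ℂ)⁻¹ • ∑ k ∈ Finset.range N, (u - Aop hu hv q (k : ℤ)) := by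
    rw [Finset.sum_sub_distrib, smul_sub, Finset.sum_const, Finset.card_range,
      ← Nat.cast_smul_eq_nsmul ℂ, smul_smul, inv_mul_cancel₀ hNC, one_smul]
  have hgauss : (∑ k ∈ Finset.range N, (k : ℝ)) = (N : ℝ) * ((N : ℝ) - 1) / 2 := by
    have h3 := congrArg (Nat.cast : ℕ → ℝ) (Finset.sum_range_id_mul_two N)
    rw [Nat.cast_mul, Nat.cast_mul, Nat.cast_sub hN1, Nat.cast_sum] at h3
    simp only [Nat.cast_ofNat, Nat.cast_one] at h3
    linarith
  have hUbound : ‖u - ((N : ℕ) : ℂ)⁻¹ • ∑ k ∈ Finset.range N, Aop hu hv q (k : ℤ)‖ < r := by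
    rw [hsubU, norm_smul, norm_inv, Complex.norm_natCast]
    have h1 : ‖∑ k ∈ Finset.range N, (u - Aop hu hv q (k : ℤ))‖
        ≤ ∑ k ∈ Finset.range N, ((k : ℝ) * δ) := by
      refine (norm_sum_le _ _).trans (Finset.sum_le_sum fun k _ => ?_)
      rw [norm_sub_rev]
      exact Aop_dist hu hv hq hδ0.le h k
    have h2 : ∑ k ∈ Finset.range N, ((k : ℝ) * δ) = (N : ℝ) * ((N : ℝ) - 1) / 2 * δ := by
      rw [← Finset.sum_mul, hgauss]
    have h3 : (N : ℝ)⁻¹ * ((N : ℝ) * ((N : ℝ) - 1) / 2 * δ) = ((N : ℝ) - 1) * δ / 2 := by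
      field_simp
    have h4 : ((N : ℝ) - 1) * δ / 2 ≤ r⁻¹ * δ / 2 := by
      have := mul_le_mul_of_nonneg_right hNle hδ0.le
      linarith
    have h5 : r⁻¹ * δ = r := by
      rw [← hrr]
      field_simp
    calc (N : ℝ)⁻¹ * ‖∑ k ∈ Finset.range N, (u - Aop hu hv q (k : ℤ))‖
        ≤ (N : ℝ)⁻¹ * (∑ k ∈ Finset.range N, ((k : ℝ) * δ)) := by
          exact mul_le_mul_of_nonneg_left h1 (by positivity)
      _ = ((N : ℝ) - 1) * δ / 2 := by rw [h2, h3]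
      _ ≤ r⁻¹ * δ / 2 := h4
      _ = r / 2 := by rw [h5]
      _ < r := by linarith
  -- error bound for v
  have hvnorm : ‖v‖ ≤ 1 := by
    have h1 := Unitary.star_mul_self_of_mem hv
    have h2 : ‖star v * v‖ = ‖v‖ * ‖v‖ := CStarRing.norm_star_mul_self
    rw [h1] at h2
    have h3 : ‖(1 : H →L[ℂ] H)‖ ≤ 1 := by
      rw [ContinuousLinearMap.one_def]
      exact ContinuousLinearMap.norm_id_le
    nlinarith [norm_nonneg v]
  have hsubV : v - (((N : ℕ) : ℂ)⁻¹ * ((N - 1 : ℕ) : ℂ)) • v = ((N : ℕ) : ℂ)⁻¹ • v := by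
    nth_rewrite 1 [← one_smul ℂ v]
    rw [← sub_smul]
    congr 1
    rw [Nat.cast_sub hN1]
    field_simp
    simp
  have hVbound : ‖v - (((N : ℕ) : ℂ)⁻¹ * ((N - 1 : ℕ) : ℂ)) • v‖ < r := by
    rw [hsubV, norm_smul, norm_inv, Complex.norm_natCast]
    calc (N : ℝ)⁻¹ * ‖v‖ ≤ (N : ℝ)⁻¹ * 1 := by
          exact mul_le_mul_of_nonneg_left hvnorm (by positivity)
      _ = (N : ℝ)⁻¹ := mul_one _
      _ < r := hNinv
  refine ⟨KK H, inferInstance, inferInstance, inferInstance, ι,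
    ((Ut : KK H →L[ℂ] KK H)), ((Vt : KK H →L[ℂ] KK H)),
    hIso, LIE_mem_unitary Ut, LIE_mem_unitary Vt, hcommut, ?_, ?_⟩
  · rw [hUcomp]
    exact hUbound
  · rw [hVcomp]
    exact hVbound
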